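/- Let x and y be words of length n over {0,…,q−1} with deletion sets D, E ⊆ {1,…,n} of equal size at most d such that x^{(D)} = y^{(E)}. Then the difference of moments satisfies Δ(x,y) = M(x) − M(y) ≤ w_{n+1}(q,d) − 1; in particular Δ(x,y) < m for any m ≥ w_{n+1}. -/

import Mathlib

/-- Weight sequence: `W p d i` = w_i(q,d) where p = q-1; w_i = 0 for i ≤ 0 (encoded by
ℕ truncated subtraction together with `W p d 0 = 0`), and w_i = 1 + p·∑_{j=1}^d w_{i-j}
for i ≥ 1. -/
def W (p d : ℕ) : ℕ → ℕ
  | 0 => 0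
  | (i+1) => 1 + p * ∑ j ∈ Finset.range d, W p d (i - j)
decreasing_by exact Nat.lt_succ_of_le (Nat.sub_le i j)

/-- Moment of a word (1-indexed): M(x) = ∑_{i=1}^{n} w_i x_i. -/
def moment (w : ℕ → ℕ) (x : List ℕ) : ℕ :=
  ∑ i ∈ Finset.range x.length, w (i + 1) * x.getD i 0

/-- Deleted word x^{(D)}: delete the symbols at the (1-indexed) positions in D,
keeping the remaining symbols in order. -/
def deleteD (x : List ℕ) (D : Finset ℕ) : List ℕ :=
  ((List.range x.length).filter (fun i => (i + 1) ∉ D)).map (fun i => x.getD i 0)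

lemma W_le_succ (p d : ℕ) : ∀ i, W p d i ≤ W p d (i + 1) := by
  intro i
  induction i using Nat.strong_induction_on with
  | _ i ih =>
    match i with
    | 0 => rw [W]; exact Nat.zero_le _
    | (i+1) =>
      rw [W, W]
      gcongr with j hj
      rcases le_or_gt j i with h | h
      · have hh : i + 1 - j = (i - j) + 1 := by omega
        rw [hh]
        exact ih (i - j) (by omega)
      · have hh : i - j = 0 := by omega
        rw [hh, W]; exact Nat.zero_le _

lemma W_mono (p d : ℕ) : Monotone (W p d) :=
  monotone_nat_of_le_succ (W_le_succ p d)

lemma moment_concat (w : ℕ → ℕ) (l : List ℕ) (a : ℕ) :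
    moment w (l ++ [a]) = moment w l + w (l.length + 1) * a := by
  unfold moment
  rw [List.length_append, List.length_singleton, Finset.sum_range_succ]
  congr 1
  · apply Finset.sum_congr rfl
    intro i hi
    have hi' : i < l.length := Finset.mem_range.mp hi
    rw [List.getD_eq_getElem _ _ (by simp; omega), List.getD_eq_getElem _ _ hi',
      List.getElem_append_left]
  · rw [List.getD_eq_getElem _ _ (by simp), List.getElem_append_right (le_refl _)]
    simp

lemma sublist_concat_cases {z y : List ℕ} {a : ℕ} (h : z.Sublist (y ++ [a])) :
    z.Sublist y ∨ ∃ z', z = z' ++ [a] ∧ z'.Sublist y := by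
  have h' : z.reverse.Sublist (a :: y.reverse) := by
    simpa using h.reverse
  rcases List.sublist_cons_iff.mp h' with h1 | ⟨r, hr, hr'⟩
  · left; simpa using h1.reverse
  · right
    refine ⟨r.reverse, ?_, by simpa using hr'.reverse⟩
    have := congrArg List.reverse hr
    simpa using this

lemma moment_le_of_sublist (w : ℕ → ℕ) (hw : Monotone w) :
    ∀ (y z : List ℕ), z.Sublist y → moment w z ≤ moment w y := by
  intro y
  induction y using List.reverseRecOn with
  | nil => intro z hz; simp [List.sublist_nil.mp hz]
  | append_singleton y a ih =>
    intro z hz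
    rcases sublist_concat_cases hz with h1 | ⟨z', rfl, hz'⟩
    · calc moment w z ≤ moment w y := ih z h1
        _ ≤ moment w (y ++ [a]) := by rw [moment_concat]; exact Nat.le_add_right _ _
    · rw [moment_concat, moment_concat]
      have := hz'.length_le
      exact Nat.add_le_add (ih z' hz')
        (Nat.mul_le_mul_right a (hw (by omega)))

lemma sum_split (p d c k : ℕ) :
    ∑ j ∈ Finset.range (k + 1), (W p d (c + k + 1 - j) : ℤ) =
      (W p d (c + k + 1) : ℤ) + ∑ j ∈ Finset.range k, (W p d (c + k - j) : ℤ) := by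
  rw [Finset.sum_range_succ' (fun j => (W p d (c + k + 1 - j) : ℤ)) k]
  have h1 : ∀ j ∈ Finset.range k, (W p d (c + k + 1 - (j + 1)) : ℤ) = W p d (c + k - j) := by
    intro j hj
    have hh : c + k + 1 - (j + 1) = c + k - j := by omega
    rw [hh]
  rw [Finset.sum_congr rfl h1]
  simp [add_comm]

lemma sum_id (p d c k : ℕ) :
    ∑ j ∈ Finset.range k, (W p d (c + k + 1 - j) : ℤ) + W p d (c + 1) =
      ∑ j ∈ Finset.range k, (W p d (c + k - j) : ℤ) + W p d (c + k + 1) := by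
  cases k with
  | zero => simp
  | succ k' =>
    rw [Finset.sum_range_succ' (fun j => (W p d (c + (k'+1) + 1 - j) : ℤ)) k',
      Finset.sum_range_succ (fun j => (W p d (c + (k'+1) - j) : ℤ)) k']
    have h1 : ∀ j ∈ Finset.range k', (W p d (c + (k'+1) + 1 - (j + 1)) : ℤ) = W p d (c + (k'+1) - j) := by
      intro j hj
      have hh : c + (k'+1) + 1 - (j + 1) = c + (k'+1) - j := by omega
      rw [hh]
    rw [Finset.sum_congr rfl h1]
    have h2 : c + (k'+1) - k' = c + 1 := by omega
    have h3 : c + (k'+1) + 1 - 0 = c + (k'+1) + 1 := by omega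
    rw [h2, h3]
    ring

lemma lemmaG (p d : ℕ) : ∀ (N : ℕ) (x y z : List ℕ),
    x.length + y.length ≤ N → (∀ a ∈ x, a ≤ p) →
    z.Sublist x → z.Sublist y →
    (moment (W p d) x : ℤ) - moment (W p d) y ≤
      p * ∑ j ∈ Finset.range (x.length - z.length), (W p d (x.length - j) : ℤ) := by
  intro N
  induction N with
  | zero =>
    intro x y z hN hx hzx hzy
    have hx0 : x = [] := List.length_eq_zero_iff.mp (by omega)
    subst hx0
    have hz0 : z = [] := List.sublist_nil.mp hzx
    subst hz0
    simp [moment]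
    positivity
  | succ N ih =>
    intro x y z hN hx hzx hzy
    by_cases heq : z.length = x.length
    · have hz : z = x := hzx.eq_of_length heq
      subst hz
      have h := moment_le_of_sublist (W p d) (W_mono p d) y z hzy
      simp [heq]
      exact_mod_cast h
    · have hlt : z.length < x.length := lt_of_le_of_ne hzx.length_le heq
      rcases x.eq_nil_or_concat with rfl | ⟨x', a, rfl⟩
      · simp at hlt
      rw [List.concat_eq_append] at *
      have ha : a ≤ p := hx a (by simp)
      have hWnn : ∀ m, (0:ℤ) ≤ W p d m := fun m => Int.natCast_nonneg _
      rcases sublist_concat_cases hzx with hz1 | ⟨z', rfl, hz'⟩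
      · -- case B : z inside x'
        have ihB := ih x' y z (by simp at hN ⊢; omega)
          (fun b hb => hx b (by simp [hb])) hz1 hzy
        rw [moment_concat]
        have hc : z.length ≤ x'.length := hz1.length_le
        set c := z.length with hcdef
        set k := x'.length - c with hkdef
        have hx'len : x'.length = c + k := by omega
        have hslen : (x' ++ [a]).length - c = k + 1 := by simp only [List.length_append, List.length_singleton]; omega
        have hxlen1 : (x' ++ [a]).length = c + k + 1 := by simp only [List.length_append, List.length_singleton]; omega
        rw [hslen, hxlen1, sum_split]
        rw [hx'len] at ihB
        have hb1 : (W p d (x'.length + 1) : ℤ) * a ≤ p * W p d (c + k + 1) := by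
          rw [hx'len]
          calc (W p d (c + k + 1) : ℤ) * a ≤ (W p d (c + k + 1) : ℤ) * p := by
                apply mul_le_mul_of_nonneg_left (by exact_mod_cast ha) (hWnn _)
            _ = p * W p d (c + k + 1) := by ring
        push_cast
        push_cast at ihB
        linarith [ihB, hb1]
      · -- z = z' ++ [a]
        rcases y.eq_nil_or_concat with rfl | ⟨y', b, rfl⟩
        · exact absurd (List.sublist_nil.mp hzy) (by simp)
        rw [List.concat_eq_append] at *
        rcases sublist_concat_cases hzy with hy1 | ⟨z₂, hz₂, hz₂'⟩
        · -- case C : z inside y'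
          have ihC := ih (x' ++ [a]) y' (z' ++ [a]) (by simp at hN ⊢; omega) hx hzx hy1
          have hmy : (moment (W p d) y' : ℤ) ≤ moment (W p d) (y' ++ [b]) := by
            rw [moment_concat]; push_cast
            have := mul_nonneg (hWnn (y'.length + 1)) (Int.natCast_nonneg b)
            linarith
          linarith
        · -- matched case
          have hab : b = a ∧ z₂ = z' := by
            have h1 := congrArg List.reverse hz₂
            simp at h1
            exact ⟨h1.1.symm, (by simpa using congrArg List.reverse h1.2 : z' = z₂).symm⟩
          obtain ⟨hb, hz2⟩ := hab
          rw [hb]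
          rw [hz2] at hz₂'
          have ihM := ih x' y' z'
            (by simp only [List.length_append, List.length_singleton] at hN; omega)
            (fun c hc => hx c (by simp [hc])) hz' hz₂'
          have hc : z'.length ≤ x'.length := hz'.length_le
          have hcy : z'.length ≤ y'.length := hz₂'.length_le
          set c := z'.length with hcdef
          set k := x'.length - c with hkdef
          have hx'len : x'.length = c + k := by omega
          have hslen : (x' ++ [a]).length - (z' ++ [a]).length = k := by simp only [List.length_append, List.length_singleton]; omega
          have hxlen1 : (x' ++ [a]).length = c + k + 1 := by simp only [List.length_append, List.length_singleton]; omega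
          rw [moment_concat, moment_concat, hslen, hxlen1]
          rw [hx'len] at ihM
          have hm1 : (W p d (c + 1) : ℤ) ≤ W p d (y'.length + 1) := by
            exact_mod_cast W_mono p d (by omega : c + 1 ≤ y'.length + 1)
          have hm2 : (W p d (c + 1) : ℤ) ≤ W p d (c + k + 1) := by
            exact_mod_cast W_mono p d (by omega : c + 1 ≤ c + k + 1)
          have hkey : ((W p d (c + k + 1) : ℤ) - W p d (y'.length + 1)) * a ≤
              p * ((W p d (c + k + 1) : ℤ) - W p d (c + 1)) := by
            calc ((W p d (c + k + 1) : ℤ) - W p d (y'.length + 1)) * a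
                ≤ ((W p d (c + k + 1) : ℤ) - W p d (c + 1)) * a := by
                  apply mul_le_mul_of_nonneg_right (by linarith) (by positivity)
              _ ≤ ((W p d (c + k + 1) : ℤ) - W p d (c + 1)) * p := by
                  apply mul_le_mul_of_nonneg_left (by exact_mod_cast ha) (by linarith)
              _ = p * ((W p d (c + k + 1) : ℤ) - W p d (c + 1)) := by ring
          have hsum := sum_id p d c k
          push_cast
          push_cast at ihM
          have hxx : x'.length + 1 = c + k + 1 := by omega
          rw [hxx]
          have hsum2 : (p:ℤ) * (∑ j ∈ Finset.range k, (W p d (c + k + 1 - j) : ℤ) + W p d (c + 1)) =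
              p * (∑ j ∈ Finset.range k, (W p d (c + k - j) : ℤ) + W p d (c + k + 1)) := by
            rw [hsum]
          linarith [ihM, hkey, hsum2]

lemma list_eq_map_range (x : List ℕ) :
    x = (List.range x.length).map (fun i => x.getD i 0) := by
  apply List.ext_getElem
  · simp
  · intro i h1 h2
    simp only [List.getElem_map, List.getElem_range]
    rw [List.getD_eq_getElem x 0 h1]

lemma deleteD_sublist (x : List ℕ) (D : Finset ℕ) : (deleteD x D).Sublist x := by
  conv_rhs => rw [list_eq_map_range x]
  exact (List.filter_sublist).map _

lemma deleteD_length {n : ℕ} (x : List ℕ) (D : Finset ℕ) (hxlen : x.length = n)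
    (hD : D ⊆ Finset.Icc 1 n) : (deleteD x D).length = n - D.card := by
  unfold deleteD
  rw [List.length_map, hxlen]
  have key : ((List.range n).filter (fun i => decide ((i+1) ∈ D))).length = D.card := by
    have hrfl : ((Finset.range n).filter (fun i => (i+1) ∈ D)).card =
        ((List.range n).filter (fun i => decide ((i+1) ∈ D))).length := rfl
    rw [← hrfl]
    apply Finset.card_bij (fun i _ => i + 1)
    · intro i hi
      simp only [Finset.mem_filter] at hi
      exact hi.2
    · intro i hi j hj h; omega
    · intro k hk
      have hmem := hD hk
      simp only [Finset.mem_Icc] at hmem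
      refine ⟨k - 1, ?_, by omega⟩
      simp only [Finset.mem_filter, Finset.mem_range]
      constructor
      · omega
      · have hh : k - 1 + 1 = k := by omega
        rw [hh]; exact hk
  have total := List.length_eq_length_filter_add (l := List.range n)
    (fun i => decide ((i+1) ∈ D))
  rw [List.length_range] at total
  have heq : (List.range n).filter (fun i => decide ((i+1) ∉ D)) =
      (List.range n).filter (fun i => !decide ((i+1) ∈ D)) := by
    simp
  rw [heq]
  omega

theorem moment_diff_le (q d n : ℕ) (hq : 2 ≤ q) (hd : 1 ≤ d)
    (x y : List ℕ) (hxlen : x.length = n) (hylen : y.length = n)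
    (hx : ∀ a ∈ x, a < q) (hy : ∀ a ∈ y, a < q)
    (D E : Finset ℕ) (hD : D ⊆ Finset.Icc 1 n) (hE : E ⊆ Finset.Icc 1 n)
    (hcard : D.card = E.card) (hd' : D.card ≤ d)
    (hdel : deleteD x D = deleteD y E) :
    (moment (W (q - 1) d) x : ℤ) - (moment (W (q - 1) d) y : ℤ) ≤
      (W (q - 1) d (n + 1) : ℤ) - 1 := by
  set p := q - 1 with hp
  have hzx : (deleteD x D).Sublist x := deleteD_sublist x D
  have hzy : (deleteD x D).Sublist y := by rw [hdel]; exact deleteD_sublist y E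
  have hDn : D.card ≤ n := le_trans (Finset.card_le_card hD) (by simp)
  have hzlen : (deleteD x D).length = n - D.card := deleteD_length x D hxlen hD
  have hs : x.length - (deleteD x D).length = D.card := by omega
  have hG := lemmaG p d (x.length + y.length) x y (deleteD x D) (le_refl _)
    (fun a ha => by have := hx a ha; omega) hzx hzy
  rw [hs, hxlen] at hG
  have hstep : ∑ j ∈ Finset.range D.card, (W p d (n - j) : ℤ) ≤
      ∑ j ∈ Finset.range d, (W p d (n - j) : ℤ) := by
    apply Finset.sum_le_sum_of_subset_of_nonneg
    · exact Finset.range_subset_range.mpr hd'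
    · intro i _ _; positivity
  have hW : (W p d (n + 1) : ℤ) = 1 + p * ∑ j ∈ Finset.range d, (W p d (n - j) : ℤ) := by
    rw [W]; push_cast; ring
  have hp0 : (0:ℤ) ≤ p := by positivity
  calc (moment (W p d) x : ℤ) - moment (W p d) y
      ≤ p * ∑ j ∈ Finset.range D.card, (W p d (n - j) : ℤ) := hG
    _ ≤ p * ∑ j ∈ Finset.range d, (W p d (n - j) : ℤ) := by
        apply mul_le_mul_of_nonneg_left hstep hp0
    _ = W p d (n + 1) - 1 := by rw [hW]; ring
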